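/- Let m ≥ 4 and let K̃, L̃ ∈ ℝ^{m×m} be symmetric matrices with zero diagonal. For pairwise distinct indices i, j, q, r ∈ {1,…,m} define h_{ijqr} := (1/24) Σ_{(s,t,u,v)} K̃_{st}(L̃_{st} + L̃_{uv} − 2 L̃_{su}), the sum over all 24 permutations (s,t,u,v) of (i,j,q,r). Then (1/(m(m−3))) [ Tr(K̃ L̃) + (𝟙ᵀK̃𝟙)(𝟙ᵀL̃𝟙)/((m−1)(m−2)) − (2/(m−2)) 𝟙ᵀK̃L̃𝟙 ] = ((m−4)!/m!) Σ_{(i,j,q,r) pairwise distinct} h_{ijqr}, where 𝟙 ∈ ℝ^m is the all-ones vector. -/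

import Mathlib

open Matrix Finset

section
variable {α : Type*} [Fintype α] [DecidableEq α]

def pi4Equiv (α : Type*) : (Fin 4 → α) ≃ α × α × α × α where
  toFun v := (v 0, v 1, v 2, v 3)
  invFun p := ![p.1, p.2.1, p.2.2.1, p.2.2.2]
  left_inv v := by funext x; fin_cases x <;> rfl
  right_inv p := rfl

omit [DecidableEq α] in
lemma sum_pi4 (f : (Fin 4 → α) → ℝ) :
    ∑ v : Fin 4 → α, f v = ∑ i, ∑ j, ∑ q, ∑ r, f ![i, j, q, r] := by
  rw [← Equiv.sum_comp (pi4Equiv α).symm f]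
  simp [Fintype.sum_prod_type, pi4Equiv]
  rfl

omit [Fintype α] [DecidableEq α] in
lemma inj4_iff (i j q r : α) :
    Function.Injective ![i, j, q, r] ↔
      (i ≠ j ∧ i ≠ q ∧ i ≠ r ∧ j ≠ q ∧ j ≠ r ∧ q ≠ r) := by
  constructor
  · intro h
    refine ⟨?_, ?_, ?_, ?_, ?_, ?_⟩
    · simpa using h.ne (show (0 : Fin 4) ≠ 1 by decide)
    · simpa using h.ne (show (0 : Fin 4) ≠ 2 by decide)
    · simpa using h.ne (show (0 : Fin 4) ≠ 3 by decide)
    · simpa using h.ne (show (1 : Fin 4) ≠ 2 by decide)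
    · simpa using h.ne (show (1 : Fin 4) ≠ 3 by decide)
    · simpa using h.ne (show (2 : Fin 4) ≠ 3 by decide)
  · rintro ⟨h1, h2, h3, h4, h5, h6⟩ a b hab
    fin_cases a <;> fin_cases b <;> simp_all
end

def Gfun (m : ℕ) (K L : Matrix (Fin m) (Fin m) ℝ) (v : Fin 4 → Fin m) : ℝ :=
  if Function.Injective v then
    K (v 0) (v 1) * (L (v 0) (v 1) + L (v 2) (v 3) - 2 * L (v 0) (v 2))
  else 0

lemma perm_collapse (m : ℕ) (K L : Matrix (Fin m) (Fin m) ℝ) :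
    (∑ i, ∑ j, ∑ q, ∑ r,
      (if i ≠ j ∧ i ≠ q ∧ i ≠ r ∧ j ≠ q ∧ j ≠ r ∧ q ≠ r then
        (1 / 24 : ℝ) * ∑ σ : Equiv.Perm (Fin 4),
          K (![i, j, q, r] (σ 0)) (![i, j, q, r] (σ 1)) *
            (L (![i, j, q, r] (σ 0)) (![i, j, q, r] (σ 1))
              + L (![i, j, q, r] (σ 2)) (![i, j, q, r] (σ 3))
              - 2 * L (![i, j, q, r] (σ 0)) (![i, j, q, r] (σ 2)))
      else 0))
    = ∑ i, ∑ j, ∑ q, ∑ r,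
        (if i ≠ j ∧ i ≠ q ∧ i ≠ r ∧ j ≠ q ∧ j ≠ r ∧ q ≠ r then
          K i j * (L i j + L q r - 2 * L i q) else 0) := by
  have h1 : (∑ i, ∑ j, ∑ q, ∑ r,
      (if i ≠ j ∧ i ≠ q ∧ i ≠ r ∧ j ≠ q ∧ j ≠ r ∧ q ≠ r then
        (1 / 24 : ℝ) * ∑ σ : Equiv.Perm (Fin 4),
          K (![i, j, q, r] (σ 0)) (![i, j, q, r] (σ 1)) *
            (L (![i, j, q, r] (σ 0)) (![i, j, q, r] (σ 1))
              + L (![i, j, q, r] (σ 2)) (![i, j, q, r] (σ 3))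
              - 2 * L (![i, j, q, r] (σ 0)) (![i, j, q, r] (σ 2)))
      else 0))
      = ∑ v : Fin 4 → Fin m,
          (if Function.Injective v then
            (1 / 24 : ℝ) * ∑ σ : Equiv.Perm (Fin 4),
              K (v (σ 0)) (v (σ 1)) *
                (L (v (σ 0)) (v (σ 1)) + L (v (σ 2)) (v (σ 3))
                  - 2 * L (v (σ 0)) (v (σ 2)))
          else 0) := by
    rw [sum_pi4]
    refine Finset.sum_congr rfl fun i _ => Finset.sum_congr rfl fun j _ =>
      Finset.sum_congr rfl fun q _ => Finset.sum_congr rfl fun r _ => ?_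
    simp only [inj4_iff]
  rw [h1]
  have h2 : ∀ v : Fin 4 → Fin m,
      (if Function.Injective v then
        (1 / 24 : ℝ) * ∑ σ : Equiv.Perm (Fin 4),
          K (v (σ 0)) (v (σ 1)) *
            (L (v (σ 0)) (v (σ 1)) + L (v (σ 2)) (v (σ 3))
              - 2 * L (v (σ 0)) (v (σ 2)))
      else 0)
      = (1 / 24 : ℝ) * ∑ σ : Equiv.Perm (Fin 4), Gfun m K L (v ∘ σ) := by
    intro v
    by_cases hv : Function.Injective v
    · rw [if_pos hv]
      congr 1
      refine Finset.sum_congr rfl fun σ _ => ?_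
      simp [Gfun, hv.comp σ.injective, Function.comp]
    · rw [if_neg hv]
      have : ∀ σ : Equiv.Perm (Fin 4), Gfun m K L (v ∘ σ) = 0 := by
        intro σ
        rw [Gfun, if_neg]
        rw [Equiv.injective_comp]
        exact hv
      simp [this]
  rw [Finset.sum_congr rfl fun v _ => h2 v, ← Finset.mul_sum, Finset.sum_comm]
  have h3 : ∀ σ : Equiv.Perm (Fin 4),
      (∑ v : Fin 4 → Fin m, Gfun m K L (v ∘ σ)) = ∑ v, Gfun m K L v := by
    intro σ
    rw [← Equiv.sum_comp (Equiv.arrowCongr σ.symm (Equiv.refl (Fin m))) (Gfun m K L)]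
    refine Finset.sum_congr rfl fun v _ => ?_
    congr 1
  rw [Finset.sum_congr rfl fun σ _ => h3 σ, Finset.sum_const]
  have hcard : Fintype.card (Equiv.Perm (Fin 4)) = 24 := by
    rw [Fintype.card_perm, Fintype.card_fin]; rfl
  rw [Finset.card_univ, hcard, sum_pi4 (Gfun m K L)]
  have h4 : ∀ i j q r : Fin m, Gfun m K L ![i, j, q, r]
      = (if i ≠ j ∧ i ≠ q ∧ i ≠ r ∧ j ≠ q ∧ j ≠ r ∧ q ≠ r then
          K i j * (L i j + L q r - 2 * L i q) else 0) := by
    intro i j q r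
    simp [Gfun, inj4_iff]
  rw [show ∀ x : ℝ, (24 : ℕ) • x = (24 : ℝ) * x from fun x => by simp]
  rw [Finset.sum_congr rfl fun i _ => Finset.sum_congr rfl fun j _ =>
    Finset.sum_congr rfl fun q _ => Finset.sum_congr rfl fun r _ => h4 i j q r]
  ring


section
variable {α : Type*} [Fintype α] [DecidableEq α]

lemma sum_del3 (f : α → ℝ) {i j q : α} (hij : i ≠ j) (hiq : i ≠ q) (hjq : j ≠ q) :
    ∑ r, (if i ≠ r ∧ j ≠ r ∧ q ≠ r then f r else 0)
      = (∑ r, f r) - f i - f j - f q := by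
  have h : ∀ r, (if i ≠ r ∧ j ≠ r ∧ q ≠ r then f r else 0)
      = f r - (if r = i then f r else 0) - (if r = j then f r else 0)
        - (if r = q then f r else 0) := by
    intro r
    by_cases h1 : r = i <;> by_cases h2 : r = j <;> by_cases h3 : r = q <;>
      simp_all [eq_comm]
  rw [Finset.sum_congr rfl fun r _ => h r]
  simp [Finset.sum_sub_distrib, Finset.sum_ite_eq']

lemma sum_del2 (f : α → ℝ) {i j : α} (hij : i ≠ j) :
    ∑ q, (if i ≠ q ∧ j ≠ q then f q else 0) = (∑ q, f q) - f i - f j := by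
  have h : ∀ q, (if i ≠ q ∧ j ≠ q then f q else 0)
      = f q - (if q = i then f q else 0) - (if q = j then f q else 0) := by
    intro q
    by_cases h1 : q = i <;> by_cases h2 : q = j <;> simp_all [eq_comm]
  rw [Finset.sum_congr rfl fun q _ => h q]
  simp [Finset.sum_sub_distrib, Finset.sum_ite_eq']
end

def Afun (m : ℕ) (K L : Matrix (Fin m) (Fin m) ℝ) (i j q : Fin m) : ℝ :=
  ((m : ℝ) - 3) * (K i j * L i j) - (2 * (m : ℝ) - 5) * (K i j * L i q)
    + K i j * (∑ r, L q r) - K i j * L j q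

lemma key_count (m : ℕ) (K L : Matrix (Fin m) (Fin m) ℝ)
    (hK_symm : K.IsSymm) (hL_symm : L.IsSymm)
    (hK_diag : ∀ i, K i i = 0) (hL_diag : ∀ i, L i i = 0) :
    (∑ i, ∑ j, ∑ q, ∑ r,
        (if i ≠ j ∧ i ≠ q ∧ i ≠ r ∧ j ≠ q ∧ j ≠ r ∧ q ≠ r then
          K i j * (L i j + L q r - 2 * L i q) else 0))
    = ((m : ℝ) - 1) * ((m : ℝ) - 2) * (∑ i, ∑ j, K i j * L i j)
      + (∑ i, ∑ j, K i j) * (∑ i, ∑ j, L i j)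
      - 2 * ((m : ℝ) - 1) * ∑ i, ((∑ j, K i j) * (∑ j, L i j)) := by
  have hK : ∀ i j, K j i = K i j := fun i j => hK_symm.apply i j
  have hL : ∀ i j, L j i = L i j := fun i j => hL_symm.apply i j
  have hm' : ((Finset.univ : Finset (Fin m)).card : ℝ) = (m : ℝ) := by
    simp
  -- innermost sum over r
  have step_r : ∀ i j q : Fin m,
      (∑ r, (if i ≠ j ∧ i ≠ q ∧ i ≠ r ∧ j ≠ q ∧ j ≠ r ∧ q ≠ r then
          K i j * (L i j + L q r - 2 * L i q) else 0))
      = if i ≠ j ∧ i ≠ q ∧ j ≠ q then Afun m K L i j q else 0 := by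
    intro i j q
    by_cases h : i ≠ j ∧ i ≠ q ∧ j ≠ q
    · rw [if_pos h]
      have hcond : ∀ r : Fin m,
          (i ≠ j ∧ i ≠ q ∧ i ≠ r ∧ j ≠ q ∧ j ≠ r ∧ q ≠ r)
            ↔ (i ≠ r ∧ j ≠ r ∧ q ≠ r) :=
        fun r => ⟨fun hh => ⟨hh.2.2.1, hh.2.2.2.2.1, hh.2.2.2.2.2⟩,
          fun hh => ⟨h.1, h.2.1, hh.1, h.2.2, hh.2.1, hh.2.2⟩⟩
      rw [Finset.sum_congr rfl fun r _ => if_congr (hcond r) rfl rfl]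
      rw [sum_del3 (fun r => K i j * (L i j + L q r - 2 * L i q)) h.1 h.2.1 h.2.2]
      have hs : (∑ r, K i j * (L i j + L q r - 2 * L i q))
          = (m : ℝ) * (K i j * L i j - 2 * (K i j * L i q)) + K i j * ∑ r, L q r := by
        calc (∑ r, K i j * (L i j + L q r - 2 * L i q))
            = ∑ r : Fin m, ((K i j * L i j - 2 * (K i j * L i q)) + K i j * L q r) :=
              Finset.sum_congr rfl fun r _ => by ring
          _ = _ := by
              rw [Finset.sum_add_distrib, Finset.sum_const, ← Finset.mul_sum,
                nsmul_eq_mul, hm']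
      rw [hs, Afun]
      rw [hL i q, hL j q, hL_diag q]
      ring
    · rw [if_neg h]
      refine Finset.sum_eq_zero fun r _ => if_neg (by tauto)
  -- sum over q
  have step_q : ∀ i j : Fin m,
      (∑ q, if i ≠ j ∧ i ≠ q ∧ j ≠ q then Afun m K L i j q else 0)
      = if i ≠ j then
          (∑ q, Afun m K L i j q) - Afun m K L i j i - Afun m K L i j j else 0 := by
    intro i j
    by_cases hij : i ≠ j
    · rw [if_pos hij]
      rw [Finset.sum_congr rfl fun q _ =>
        if_congr (⟨fun hh => ⟨hh.2.1, hh.2.2⟩, fun hh => ⟨hij, hh.1, hh.2⟩⟩ :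
          (i ≠ j ∧ i ≠ q ∧ j ≠ q) ↔ (i ≠ q ∧ j ≠ q)) rfl rfl]
      exact sum_del2 (fun q => Afun m K L i j q) hij
    · rw [if_neg hij]
      refine Finset.sum_eq_zero fun q _ => if_neg (by tauto)
  -- drop the `if i ≠ j`
  have diag0 : ∀ i : Fin m,
      (∑ q, Afun m K L i i q) - Afun m K L i i i - Afun m K L i i i = 0 := by
    intro i
    simp [Afun, hK_diag]
  -- sum over q of Afun
  have hAq : ∀ i j : Fin m,
      (∑ q, Afun m K L i j q)
      = (m : ℝ) * (((m : ℝ) - 3) * (K i j * L i j))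
          - (2 * (m : ℝ) - 5) * (K i j * ∑ r, L i r)
          + K i j * (∑ q, ∑ r, L q r) - K i j * ∑ r, L j r := by
    intro i j
    simp only [Afun]
    rw [Finset.sum_sub_distrib, Finset.sum_add_distrib, Finset.sum_sub_distrib,
      Finset.sum_const, ← Finset.mul_sum, ← Finset.mul_sum, ← Finset.mul_sum,
      ← Finset.mul_sum, nsmul_eq_mul, hm']
  -- pointwise value of the inner double sum
  have hpt : ∀ i j : Fin m,
      (∑ q, Afun m K L i j q) - Afun m K L i j i - Afun m K L i j j
      = ((m : ℝ) - 1) * ((m : ℝ) - 2) * (K i j * L i j)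
          + K i j * (∑ q, ∑ r, L q r)
          - 2 * ((m : ℝ) - 2) * (K i j * ∑ r, L i r)
          - 2 * (K i j * ∑ r, L j r) := by
    intro i j
    rw [hAq i j]
    simp only [Afun]
    rw [hL_diag i, hL_diag j, hL i j]
    ring
  -- assemble
  calc (∑ i, ∑ j, ∑ q, ∑ r,
        (if i ≠ j ∧ i ≠ q ∧ i ≠ r ∧ j ≠ q ∧ j ≠ r ∧ q ≠ r then
          K i j * (L i j + L q r - 2 * L i q) else 0))
      = ∑ i, ∑ j, ((∑ q, Afun m K L i j q) - Afun m K L i j i - Afun m K L i j j) := by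
        refine Finset.sum_congr rfl fun i _ => Finset.sum_congr rfl fun j _ => ?_
        rw [Finset.sum_congr rfl fun q _ => step_r i j q, step_q i j]
        by_cases hij : i ≠ j
        · rw [if_pos hij]
        · rw [if_neg hij]
          push_neg at hij
          subst hij
          exact (diag0 i).symm
    _ = ∑ i, ∑ j,
          (((m : ℝ) - 1) * ((m : ℝ) - 2) * (K i j * L i j)
            + K i j * (∑ q, ∑ r, L q r)
            - 2 * ((m : ℝ) - 2) * (K i j * ∑ r, L i r)
            - 2 * (K i j * ∑ r, L j r)) := by
        exact Finset.sum_congr rfl fun i _ => Finset.sum_congr rfl fun j _ => hpt i j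
    _ = ((m : ℝ) - 1) * ((m : ℝ) - 2) * (∑ i, ∑ j, K i j * L i j)
          + (∑ i, ∑ j, K i j) * (∑ i, ∑ j, L i j)
          - 2 * ((m : ℝ) - 1) * ∑ i, ((∑ j, K i j) * (∑ j, L i j)) := by
        simp only [Finset.sum_sub_distrib, Finset.sum_add_distrib]
        have e1 : (∑ i, ∑ j, ((m : ℝ) - 1) * ((m : ℝ) - 2) * (K i j * L i j))
            = ((m : ℝ) - 1) * ((m : ℝ) - 2) * (∑ i, ∑ j, K i j * L i j) := by
          simp only [← Finset.mul_sum]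
        have e2 : (∑ i, ∑ j, K i j * (∑ q, ∑ r, L q r))
            = (∑ i, ∑ j, K i j) * (∑ i, ∑ j, L i j) := by
          rw [Finset.sum_mul]
          exact Finset.sum_congr rfl fun i _ => (Finset.sum_mul _ _ _).symm
        have e3 : (∑ i, ∑ j, 2 * ((m : ℝ) - 2) * (K i j * ∑ r, L i r))
            = 2 * ((m : ℝ) - 2) * ∑ i, ((∑ j, K i j) * (∑ j, L i j)) := by
          simp only [← Finset.mul_sum]
          congr 1
          refine Finset.sum_congr rfl fun i _ => ?_
          rw [← Finset.sum_mul]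
        have e4 : (∑ i, ∑ j, 2 * (K i j * ∑ r, L j r))
            = 2 * ∑ i, ((∑ j, K i j) * (∑ j, L i j)) := by
          simp only [← Finset.mul_sum]
          congr 1
          rw [Finset.sum_comm]
          refine Finset.sum_congr rfl fun j _ => ?_
          rw [← Finset.sum_mul]
          congr 1
          exact Finset.sum_congr rfl fun i _ => hK j i
        rw [e1, e2, e3, e4]
        ring


theorem stmt_5
    (m : ℕ) (hm : 4 ≤ m)
    (K L : Matrix (Fin m) (Fin m) ℝ)
    (hK_symm : K.IsSymm) (hL_symm : L.IsSymm)
    (hK_diag : ∀ i, K i i = 0) (hL_diag : ∀ i, L i i = 0) :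
    (1 / ((m : ℝ) * ((m : ℝ) - 3))) *
        (Matrix.trace (K * L)
          + (∑ i, ∑ j, K i j) * (∑ i, ∑ j, L i j) / (((m : ℝ) - 1) * ((m : ℝ) - 2))
          - (2 / ((m : ℝ) - 2)) * ∑ i, ∑ j, (K * L) i j)
      = ((Nat.factorial (m - 4) : ℝ) / (Nat.factorial m : ℝ)) *
          ∑ i, ∑ j, ∑ q, ∑ r,
            (if i ≠ j ∧ i ≠ q ∧ i ≠ r ∧ j ≠ q ∧ j ≠ r ∧ q ≠ r then
              (1 / 24) * ∑ σ : Equiv.Perm (Fin 4),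
                K (![i, j, q, r] (σ 0)) (![i, j, q, r] (σ 1)) *
                  (L (![i, j, q, r] (σ 0)) (![i, j, q, r] (σ 1))
                    + L (![i, j, q, r] (σ 2)) (![i, j, q, r] (σ 3))
                    - 2 * L (![i, j, q, r] (σ 0)) (![i, j, q, r] (σ 2)))
            else 0) := by
  have hK : ∀ i j, K j i = K i j := fun i j => hK_symm.apply i j
  have hL : ∀ i j, L j i = L i j := fun i j => hL_symm.apply i j
  rw [perm_collapse m K L, key_count m K L hK_symm hL_symm hK_diag hL_diag]
  have htr : Matrix.trace (K * L) = ∑ i, ∑ j, K i j * L i j := by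
    rw [Matrix.trace]
    refine Finset.sum_congr rfl fun i _ => ?_
    rw [Matrix.diag_apply, Matrix.mul_apply]
    exact Finset.sum_congr rfl fun j _ => by rw [hL i j]
  have hc : (∑ i, ∑ j, (K * L) i j) = ∑ i, ((∑ j, K i j) * (∑ j, L i j)) := by
    simp only [Matrix.mul_apply]
    calc (∑ i, ∑ j, ∑ k, K i k * L k j)
        = ∑ i, ∑ k, ∑ j, K i k * L k j :=
          Finset.sum_congr rfl fun i _ => Finset.sum_comm
      _ = ∑ i, ∑ k, K i k * ∑ j, L k j := by
          simp only [← Finset.mul_sum]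
      _ = ∑ k : Fin m, ∑ i : Fin m, K i k * ∑ j, L k j := Finset.sum_comm
      _ = ∑ k : Fin m, (∑ i, K i k) * ∑ j, L k j := by
          refine Finset.sum_congr rfl fun k _ => ?_
          rw [Finset.sum_mul]
      _ = ∑ k : Fin m, (∑ i, K k i) * ∑ j, L k j := by
          refine Finset.sum_congr rfl fun k _ => ?_
          congr 1
          exact Finset.sum_congr rfl fun i _ => hK k i
  rw [htr, hc]
  obtain ⟨n, rfl⟩ : ∃ n, m = n + 4 := ⟨m - 4, by omega⟩
  have hfacN : Nat.factorial (n + 4)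
      = (n + 4) * (n + 3) * (n + 2) * (n + 1) * Nat.factorial n := by
    rw [show n + 4 = n + 3 + 1 from rfl, Nat.factorial_succ,
      show n + 3 = n + 2 + 1 from rfl, Nat.factorial_succ,
      show n + 2 = n + 1 + 1 from rfl, Nat.factorial_succ,
      Nat.factorial_succ]
    ring
  have h4 : n + 4 - 4 = n := by omega
  rw [h4, hfacN]
  generalize (∑ i, ∑ j, K i j * L i j) = T
  generalize (∑ i, ∑ j, K i j) = a
  generalize (∑ i, ∑ j, L i j) = b
  generalize (∑ i, ((∑ j, K i j) * (∑ j, L i j))) = d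
  have hnf : (Nat.factorial n : ℝ) ≠ 0 := by positivity
  have h0 : ((n : ℝ) + 4) ≠ 0 := by positivity
  have h1 : ((n : ℝ) + 4) - 1 ≠ 0 := by nlinarith [Nat.cast_nonneg (α := ℝ) n]
  have h2 : ((n : ℝ) + 4) - 2 ≠ 0 := by nlinarith [Nat.cast_nonneg (α := ℝ) n]
  have h3 : ((n : ℝ) + 4) - 3 ≠ 0 := by nlinarith [Nat.cast_nonneg (α := ℝ) n]
  push_cast
  field_simp
  ring
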